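/- In the simple pursuit game in ℝ² with pursuer speed G_P, evader speed G_E, G_P > G_E, and capture radius γ, the evader moving in the constant direction directly away from the pursuer's initial position guarantees that capture time is at least (d - γ)/(G_P + G_E) for any pursuer strategy, where d is the initial distance; combined with pure pursuit against a straight-fleeing evader, the optimal capture time when the evader flees optimally is exactly q = (d - γ)/(G_P - G_E). -/

import Mathlib

/-- In the simple pursuit game with speeds `GP > GE` and capture radius `γ`,
(a) the evader fleeing in the constant direction directly away from the pursuer's
initial position guarantees capture time at least `(d - γ)/(GP + GE)` against any
pursuer trajectory with speed at most `GP`;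
(b) against this straight-fleeing evader, the pure-pursuit (straight-line) pursuer
captures, and the infimum of capture times is exactly `q = (d - γ)/(GP - GE)`. -/
theorem pursuit_capture_time_bounds
    (GP GE γ d : ℝ) (hGE : 0 < GE) (hG : GE < GP) (hγ : 0 < γ) (hdγ : γ < d)
    (zP0 zE0 : EuclideanSpace ℝ (Fin 2)) (hd : dist zP0 zE0 = d)
    -- the evader's straight-fleeing trajectory, away from the pursuer's initial position
    (zE : ℝ → EuclideanSpace ℝ (Fin 2))
    (hzE : ∀ t, zE t = zE0 + (GE * t) • (d⁻¹ • (zE0 - zP0)))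
    -- the pure-pursuit pursuer's trajectory (chasing along the line of centers)
    (zPstar : ℝ → EuclideanSpace ℝ (Fin 2))
    (hzPstar : ∀ t, zPstar t = zP0 + (GP * t) • (d⁻¹ • (zE0 - zP0))) :
    -- (a) lower bound against any pursuer of speed at most GP
    (∀ zP : ℝ → EuclideanSpace ℝ (Fin 2), zP 0 = zP0 →
      (∀ s t : ℝ, dist (zP s) (zP t) ≤ GP * |s - t|) →
      ∀ t ≥ (0 : ℝ), dist (zP t) (zE t) ≤ γ → (d - γ) / (GP + GE) ≤ t) ∧
    -- (b) exact capture time for pure pursuit against the straight-fleeing evader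
    sInf {t : ℝ | 0 ≤ t ∧ dist (zPstar t) (zE t) ≤ γ} = (d - γ) / (GP - GE) := by
  have hd0 : (0:ℝ) < d := hγ.trans hdγ
  have hv : ‖zE0 - zP0‖ = d := by rw [← dist_eq_norm, dist_comm, hd]
  have key : ∀ c : ℝ, ‖(zE0 - zP0) + c • (d⁻¹ • (zE0 - zP0))‖ = |d + c| := by
    intro c
    have h1 : (zE0 - zP0) + c • (d⁻¹ • (zE0 - zP0)) = (d⁻¹ * (d + c)) • (zE0 - zP0) := by
      have hdne : d ≠ 0 := hd0.ne'
      match_scalars <;> field_simp <;> ring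
    rw [h1, norm_smul, hv, Real.norm_eq_abs, abs_mul, abs_inv, abs_of_pos hd0]
    field_simp
  constructor
  · intro zP hzP0 hLip t ht hcap
    have h1 : dist (zE t) zP0 = d + GE * t := by
      rw [dist_eq_norm]
      have : zE t - zP0 = (zE0 - zP0) + (GE * t) • (d⁻¹ • (zE0 - zP0)) := by
        rw [hzE]; abel
      rw [this, key, abs_of_pos]
      positivity
    have h2 : dist (zP t) zP0 ≤ GP * t := by
      have := hLip t 0
      rw [hzP0] at this
      simpa [abs_of_nonneg ht] using this
    have h3 : dist (zE t) zP0 ≤ dist (zE t) (zP t) + dist (zP t) zP0 := dist_triangle _ _ _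
    rw [dist_comm (zE t) (zP t)] at h3
    rw [div_le_iff₀ (by linarith)]
    nlinarith
  · set c := GP - GE with hc
    have hc0 : (0:ℝ) < c := by simp [hc]; linarith
    have hdist : ∀ t : ℝ, dist (zPstar t) (zE t) = |d - c * t| := by
      intro t
      rw [dist_comm, dist_eq_norm]
      have : zE t - zPstar t = (zE0 - zP0) + (GE * t - GP * t) • (d⁻¹ • (zE0 - zP0)) := by
        rw [hzE, hzPstar]; module
      rw [this, key]
      ring_nf
      congr 1; rw [hc]; ring
    have hset : {t : ℝ | 0 ≤ t ∧ dist (zPstar t) (zE t) ≤ γ}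
        = Set.Icc ((d - γ) / c) ((d + γ) / c) := by
      ext t
      simp only [Set.mem_setOf_eq, Set.mem_Icc, hdist, abs_le]
      constructor
      · rintro ⟨ht, h1, h2⟩
        constructor
        · rw [div_le_iff₀ hc0]; linarith
        · rw [le_div_iff₀ hc0]; linarith
      · rintro ⟨h1, h2⟩
        have h1' : d - γ ≤ t * c := (div_le_iff₀ hc0).mp h1
        have h2' : t * c ≤ d + γ := (le_div_iff₀ hc0).mp h2
        have hq : 0 < (d - γ) / c := div_pos (by linarith) hc0
        exact ⟨by linarith, by linarith, by linarith⟩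
    rw [hset]
    exact csInf_Icc (by gcongr <;> linarith)
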